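/- Fix integers ℓ ≥ 2, p with 1 ≤ p ≤ ℓ−1, and w ≥ 0. Consider the two systems, for P : ℝ → ℂ²: y(1−y)P″(y) − [[(ℓ+1)(2y−1), −1],[−1, (ℓ+1)(2y−1)]]·P′(y) − Λ_δ·P(y) = 0, where Λ₀ = diag(−(w+1)(w+2ℓ)+2ℓ, −(w+1)(w+2ℓ)+2(2ℓ−p)) (case δ = 0) and Λ₁ = diag(−(w+1)(w+2ℓ)+2p, −(w+1)(w+2ℓ)+2ℓ) (case δ = 1). In each case, the space of ℂ²-valued polynomial solutions is one-dimensional; every nonzero polynomial solution has degree exactly w, and its leading coefficient is a nonzero scalar multiple of (1,0)ᵀ in the case δ = 0 and of (0,1)ᵀ in the case δ = 1. -/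

import Mathlib

namespace Stmt13

/-- The `ℂ²`-valued function determined by a pair of polynomials. -/
def Fq (q : Fin 2 → Polynomial ℂ) : ℝ → Fin 2 → ℂ :=
  fun y j => (q j).eval (y:ℂ)

/-- The first-order coefficient matrix `[[(ℓ+1)(2y-1), -1], [-1, (ℓ+1)(2y-1)]]`. -/
noncomputable def coefM (ℓ : ℕ) (y : ℝ) : Matrix (Fin 2) (Fin 2) ℂ :=
  !![((ℓ:ℂ)+1)*(2*(y:ℂ)-1), -1; -1, ((ℓ:ℂ)+1)*(2*(y:ℂ)-1)]

/-- `Λ₀ = diag(-(w+1)(w+2ℓ)+2ℓ, -(w+1)(w+2ℓ)+2(2ℓ-p))` (case `δ = 0`) and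
`Λ₁ = diag(-(w+1)(w+2ℓ)+2p, -(w+1)(w+2ℓ)+2ℓ)` (case `δ = 1`). -/
noncomputable def LamMat (ℓ p w : ℕ) (δ : Fin 2) : Matrix (Fin 2) (Fin 2) ℂ :=
  if δ = 0 then
    Matrix.diagonal ![-(((w:ℂ)+1)*((w:ℂ)+2*(ℓ:ℂ))) + 2*(ℓ:ℂ),
                      -(((w:ℂ)+1)*((w:ℂ)+2*(ℓ:ℂ))) + 2*(2*(ℓ:ℂ) - (p:ℂ))]
  else
    Matrix.diagonal ![-(((w:ℂ)+1)*((w:ℂ)+2*(ℓ:ℂ))) + 2*(p:ℂ),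
                      -(((w:ℂ)+1)*((w:ℂ)+2*(ℓ:ℂ))) + 2*(ℓ:ℂ)]

/-- The system `y(1-y)P'' - [[(ℓ+1)(2y-1),-1],[-1,(ℓ+1)(2y-1)]]P' - Λ_δ P = 0`. -/
def IsSol (ℓ p w : ℕ) (δ : Fin 2) (q : Fin 2 → Polynomial ℂ) : Prop :=
  ∀ y : ℝ,
    ((y:ℂ) * (1 - (y:ℂ))) • deriv (deriv (Fq q)) y
      - (coefM ℓ y).mulVec (deriv (Fq q) y)
      - (LamMat ℓ p w δ).mulVec (Fq q y) = 0

open Polynomial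

/-! ### Derivatives of `Fq` -/

lemma fq_hasDerivAt (q : Fin 2 → Polynomial ℂ) (y : ℝ) :
    HasDerivAt (Fq q) (Fq (fun j => (q j).derivative) y) y := by
  rw [hasDerivAt_pi]
  intro j
  exact ((q j).hasDerivAt (y:ℂ)).comp_ofReal

lemma deriv_Fq (q : Fin 2 → Polynomial ℂ) :
    deriv (Fq q) = Fq (fun j => (q j).derivative) := by
  funext y
  exact (fq_hasDerivAt q y).deriv

/-! ### Polynomial reformulation -/

/-- The scalar system polynomial for one component. -/
noncomputable def sysP (ℓ : ℕ) (lam : ℂ) (f g : Polynomial ℂ) : Polynomial ℂ :=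
  X * (1 - X) * f.derivative.derivative
    - C ((ℓ:ℂ)+1) * (2*X - 1) * f.derivative + g.derivative - C lam * f

lemma poly_zero_of_forall_real (P : Polynomial ℂ) (h : ∀ y : ℝ, P.eval (y:ℂ) = 0) :
    P = 0 := by
  apply P.eq_zero_of_infinite_isRoot
  apply Set.Infinite.mono (s := Set.range (fun y : ℝ => (y:ℂ)))
  · rintro x ⟨y, rfl⟩; exact h y
  · exact Set.infinite_range_of_injective Complex.ofReal_injective

lemma isSol_iff (ℓ p w : ℕ) (δ : Fin 2) (d0 d1 : ℂ)
    (hL : LamMat ℓ p w δ = Matrix.diagonal ![d0, d1]) (q : Fin 2 → Polynomial ℂ) :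
    IsSol ℓ p w δ q ↔
      sysP ℓ d0 (q 0) (q 1) = 0 ∧ sysP ℓ d1 (q 1) (q 0) = 0 := by
  unfold IsSol
  rw [deriv_Fq, deriv_Fq]
  constructor
  · intro h
    constructor <;> apply poly_zero_of_forall_real <;> intro y
    · have h0 := congrFun (h y) 0
      simp only [Fq, coefM, hL, Matrix.mulVec, dotProduct, Fin.sum_univ_two,
        Matrix.cons_val', Matrix.cons_val_zero, Matrix.cons_val_one, Matrix.head_cons,
        Matrix.empty_val', Matrix.cons_val_fin_one, Matrix.head_fin_const,
        Matrix.diagonal, Matrix.of_apply, Pi.sub_apply, Pi.smul_apply, smul_eq_mul,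
        Pi.zero_apply, if_true, if_false, Fin.zero_eta, Fin.mk_one, ne_eq,
        zero_ne_one, one_ne_zero, not_false_eq_true, ite_true, ite_false] at h0
      simp only [sysP, eval_sub, eval_add, eval_mul, eval_C, eval_X, eval_one,
        eval_ofNat] at *
      linear_combination h0
    · have h1 := congrFun (h y) 1
      simp only [Fq, coefM, hL, Matrix.mulVec, dotProduct, Fin.sum_univ_two,
        Matrix.cons_val', Matrix.cons_val_zero, Matrix.cons_val_one, Matrix.head_cons,
        Matrix.empty_val', Matrix.cons_val_fin_one, Matrix.head_fin_const,
        Matrix.diagonal, Matrix.of_apply, Pi.sub_apply, Pi.smul_apply, smul_eq_mul,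
        Pi.zero_apply, if_true, if_false, Fin.zero_eta, Fin.mk_one, ne_eq,
        zero_ne_one, one_ne_zero, not_false_eq_true, ite_true, ite_false] at h1
      simp only [sysP, eval_sub, eval_add, eval_mul, eval_C, eval_X, eval_one,
        eval_ofNat] at *
      linear_combination h1
  · rintro ⟨h0, h1⟩ y
    have e0 := congrArg (eval (y:ℂ)) h0
    have e1 := congrArg (eval (y:ℂ)) h1
    simp only [sysP, eval_sub, eval_add, eval_mul, eval_C, eval_X, eval_one,
      eval_ofNat, eval_zero] at e0 e1
    funext j
    fin_cases j <;>
      simp only [Fq, coefM, hL, Matrix.mulVec, dotProduct, Fin.sum_univ_two,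
        Matrix.cons_val', Matrix.cons_val_zero, Matrix.cons_val_one, Matrix.head_cons,
        Matrix.empty_val', Matrix.cons_val_fin_one, Matrix.head_fin_const,
        Matrix.diagonal, Matrix.of_apply, Pi.sub_apply, Pi.smul_apply, smul_eq_mul,
        Pi.zero_apply, if_true, if_false, Fin.zero_eta, Fin.mk_one, ne_eq,
        zero_ne_one, one_ne_zero, not_false_eq_true, ite_true, ite_false]
    · linear_combination e0
    · linear_combination e1

/-! ### Coefficient recurrence -/

def Rec (ℓ : ℕ) (lam : ℂ) (a b : ℕ → ℂ) (n : ℕ) : Prop :=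
  ((n:ℂ)+1)*((n:ℂ)+(ℓ:ℂ)+1)*a (n+1) + ((n:ℂ)+1)*b (n+1)
    = ((n:ℂ)*((n:ℂ)+2*(ℓ:ℂ)+1)+lam)*a n

def Dv (ℓ : ℕ) (lam : ℂ) (n : ℕ) : ℂ := (n:ℂ)*((n:ℂ)+2*(ℓ:ℂ)+1)+lam

lemma coeff_sysP (ℓ : ℕ) (lam : ℂ) (f g : Polynomial ℂ) (n : ℕ) :
    (sysP ℓ lam f g).coeff n =
      (((n:ℂ)+1)*((n:ℂ)+(ℓ:ℂ)+1)*f.coeff (n+1) + ((n:ℂ)+1)*g.coeff (n+1))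
        - (((n:ℂ)*((n:ℂ)+2*(ℓ:ℂ)+1)+lam)*f.coeff n) := by
  have hexp : sysP ℓ lam f g =
      X * f.derivative.derivative - X * (X * f.derivative.derivative)
        - C (2*((ℓ:ℂ)+1)) * (X * f.derivative) + C ((ℓ:ℂ)+1) * f.derivative
        + g.derivative - C lam * f := by
    unfold sysP
    simp only [map_mul, map_add, map_ofNat, map_one]
    ring
  rw [hexp]
  simp only [coeff_sub, coeff_add, coeff_C_mul]
  rcases n with _ | m
  · simp only [mul_coeff_zero, coeff_X_zero, zero_mul, coeff_derivative]
    push_cast; ring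
  · rw [coeff_X_mul, coeff_X_mul, coeff_X_mul]
    rcases m with _ | k
    · simp only [mul_coeff_zero, coeff_X_zero, zero_mul, coeff_derivative]
      push_cast; ring
    · rw [coeff_X_mul]
      simp only [coeff_derivative]
      push_cast; ring

lemma sysP_eq_zero_iff (ℓ : ℕ) (lam : ℂ) (f g : Polynomial ℂ) :
    sysP ℓ lam f g = 0 ↔ ∀ n, Rec ℓ lam f.coeff g.coeff n := by
  rw [Polynomial.ext_iff]
  apply forall_congr'
  intro n
  rw [coeff_sysP, coeff_zero, sub_eq_zero]
  rfl

/-! ### The canonical solution sequence -/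

noncomputable def stepv (ℓ : ℕ) (la lb : ℂ) (n : ℕ) (v : ℂ × ℂ) : ℂ × ℂ :=
  (((n:ℂ)+1)*(((n:ℂ)+(ℓ:ℂ)+1)*v.1 + v.2) / Dv ℓ la n,
   ((n:ℂ)+1)*(((n:ℂ)+(ℓ:ℂ)+1)*v.2 + v.1) / Dv ℓ lb n)

noncomputable def gseq (ℓ w : ℕ) (la lb : ℂ) : ℕ → ℂ × ℂ
  | 0 => (1, 0)
  | (k+1) => stepv ℓ la lb (w - (k+1)) (gseq ℓ w la lb k)

noncomputable def can (ℓ w : ℕ) (la lb : ℂ) (n : ℕ) : ℂ × ℂ :=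
  if n ≤ w then gseq ℓ w la lb (w - n) else 0

lemma can_w (ℓ w : ℕ) (la lb : ℂ) : can ℓ w la lb w = (1, 0) := by
  simp [can, gseq]

lemma can_gt (ℓ w : ℕ) (la lb : ℂ) {n : ℕ} (h : w < n) : can ℓ w la lb n = 0 := by
  simp [can, Nat.not_le.mpr h]

lemma can_step (ℓ w : ℕ) (la lb : ℂ) {n : ℕ} (h : n < w) :
    can ℓ w la lb n = stepv ℓ la lb n (can ℓ w la lb (n+1)) := by
  have h1 : w - n = (w - (n+1)) + 1 := by omega
  have h2 : w - ((w - (n+1)) + 1) = n := by omega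
  simp only [can, Nat.le_of_lt h, if_true, (by omega : n + 1 ≤ w), if_true, h1, gseq, h2]

section Master
variable (ℓ w : ℕ) (la lb : ℂ)
variable (hda0 : Dv ℓ la w = 0) (hda : ∀ n : ℕ, n ≠ w → Dv ℓ la n ≠ 0)
variable (hdb : ∀ n : ℕ, Dv ℓ lb n ≠ 0)

include hda in
lemma can_rec1 (hda0 : Dv ℓ la w = 0) :
    ∀ n, Rec ℓ la (fun n => (can ℓ w la lb n).1) (fun n => (can ℓ w la lb n).2) n := by
  intro n
  unfold Rec
  beta_reduce
  rcases lt_trichotomy n w with h | h | h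
  · rw [can_step ℓ w la lb h]
    have hd : ((n:ℂ)*((n:ℂ)+2*(ℓ:ℂ)+1)+la) ≠ 0 := hda n (by omega)
    simp only [stepv, Dv]
    rw [mul_div_assoc', eq_div_iff hd]
    ring
  · subst h
    rw [can_gt (h := by omega), can_w]
    have h0 : ((n:ℂ)*((n:ℂ)+2*(ℓ:ℂ)+1)+la) = 0 := hda0
    rw [h0]
    simp
  · rw [can_gt ℓ w la lb h, can_gt ℓ w la lb (by omega : w < n+1)]
    simp

include hdb in
lemma can_rec2 :
    ∀ n, Rec ℓ lb (fun n => (can ℓ w la lb n).2) (fun n => (can ℓ w la lb n).1) n := by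
  intro n
  unfold Rec
  beta_reduce
  rcases lt_trichotomy n w with h | h | h
  · rw [can_step ℓ w la lb h]
    have hd : ((n:ℂ)*((n:ℂ)+2*(ℓ:ℂ)+1)+lb) ≠ 0 := hdb n
    simp only [stepv, Dv]
    rw [mul_div_assoc', eq_div_iff hd]
    ring
  · subst h
    rw [can_gt (h := by omega), can_w]
    simp
  · rw [can_gt ℓ w la lb h, can_gt ℓ w la lb (by omega : w < n+1)]
    simp

include hda0 hda hdb in
lemma master (a b : ℕ → ℂ)
    (h1 : ∀ n, Rec ℓ la a b n) (h2 : ∀ n, Rec ℓ lb b a n)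
    (N : ℕ) (hN : ∀ n, N ≤ n → a n = 0 ∧ b n = 0) :
    (∀ n, w < n → a n = 0 ∧ b n = 0) ∧ b w = 0 ∧
      (∀ n, a n = a w * (can ℓ w la lb n).1 ∧ b n = a w * (can ℓ w la lb n).2) := by
  have tail : ∀ k n, w < n → N ≤ n + k → a n = 0 ∧ b n = 0 := by
    intro k
    induction k with
    | zero => intro n hn hNn; exact hN n (by omega)
    | succ k ih =>
      intro n hn hNn
      by_cases hc : N ≤ n + k
      · exact ih n hn hc
      · have hnext := ih (n+1) (by omega) (by omega)
        have e1 := h1 n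
        have e2 := h2 n
        unfold Rec at e1 e2
        rw [hnext.1, hnext.2] at e1 e2
        simp only [mul_zero, add_zero, zero_add] at e1 e2
        exact ⟨(mul_eq_zero.mp e1.symm).resolve_left (hda n (by omega)),
               (mul_eq_zero.mp e2.symm).resolve_left (hdb n)⟩
  have tail' : ∀ n, w < n → a n = 0 ∧ b n = 0 := fun n hn => tail N n hn (by omega)
  have hbw : b w = 0 := by
    have e2 := h2 w
    unfold Rec at e2
    rw [(tail' (w+1) (by omega)).1, (tail' (w+1) (by omega)).2] at e2
    simp only [mul_zero, add_zero, zero_add] at e2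
    exact (mul_eq_zero.mp e2.symm).resolve_left (hdb w)
  refine ⟨tail', hbw, ?_⟩
  have down : ∀ k n, n + k = w →
      a n = a w * (can ℓ w la lb n).1 ∧ b n = a w * (can ℓ w la lb n).2 := by
    intro k
    induction k with
    | zero =>
      intro n hn
      have hnw : n = w := by omega
      subst hnw
      rw [can_w]
      exact ⟨by simp, by simp [hbw]⟩
    | succ k ih =>
      intro n hn
      have hlt : n < w := by omega
      have ihn := ih (n+1) (by omega)
      have e1 := h1 n
      have e2 := h2 n
      unfold Rec at e1 e2
      rw [ihn.1, ihn.2] at e1 e2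
      rw [can_step ℓ w la lb hlt]
      have hd1 : ((n:ℂ)*((n:ℂ)+2*(ℓ:ℂ)+1)+la) ≠ 0 := hda n (by omega)
      have hd2 : ((n:ℂ)*((n:ℂ)+2*(ℓ:ℂ)+1)+lb) ≠ 0 := hdb n
      constructor
      · simp only [stepv, Dv]
        rw [mul_div_assoc', eq_div_iff hd1]
        linear_combination -e1
      · simp only [stepv, Dv]
        rw [mul_div_assoc', eq_div_iff hd2]
        linear_combination -e2
  intro n
  rcases le_or_gt n w with h | h
  · exact down (w - n) n (by omega)
  · rw [can_gt ℓ w la lb h, (tail' n h).1, (tail' n h).2]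
    simp

end Master

/-! ### Nonvanishing of the diagonal factors -/

lemma Dla0 (ℓ w : ℕ) :
    Dv ℓ (-(((w:ℂ)+1)*((w:ℂ)+2*(ℓ:ℂ))) + 2*(ℓ:ℂ)) w = 0 := by
  simp only [Dv]; ring

lemma Dla (ℓ w n : ℕ) (h : n ≠ w) :
    Dv ℓ (-(((w:ℂ)+1)*((w:ℂ)+2*(ℓ:ℂ))) + 2*(ℓ:ℂ)) n ≠ 0 := by
  have e : Dv ℓ (-(((w:ℂ)+1)*((w:ℂ)+2*(ℓ:ℂ))) + 2*(ℓ:ℂ)) n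
      = ((((n:ℤ)-(w:ℤ))*((n:ℤ)+(w:ℤ)+2*(ℓ:ℤ)+1) : ℤ) : ℂ) := by
    simp only [Dv]; push_cast; ring
  rw [e, Int.cast_ne_zero]
  exact mul_ne_zero (by omega) (by omega)

lemma Dlb0 (ℓ p w n : ℕ) (hp1 : 1 ≤ p) (hp2' : p + 1 ≤ ℓ) :
    Dv ℓ (-(((w:ℂ)+1)*((w:ℂ)+2*(ℓ:ℂ))) + 2*(2*(ℓ:ℂ) - (p:ℂ))) n ≠ 0 := by
  have e : Dv ℓ (-(((w:ℂ)+1)*((w:ℂ)+2*(ℓ:ℂ))) + 2*(2*(ℓ:ℂ) - (p:ℂ))) n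
      = (((((n:ℤ)-(w:ℤ))*((n:ℤ)+(w:ℤ)+2*(ℓ:ℤ)+1) + 2*((ℓ:ℤ)-(p:ℤ))) : ℤ) : ℂ) := by
    simp only [Dv]; push_cast; ring
  rw [e, Int.cast_ne_zero]
  have hpz : 1 ≤ (p:ℤ) := by exact_mod_cast hp1
  have hplz : (p:ℤ) + 1 ≤ (ℓ:ℤ) := by exact_mod_cast hp2'
  rcases lt_trichotomy (n:ℤ) (w:ℤ) with h | h | h
  · have hb : (0:ℤ) < (n:ℤ)+(w:ℤ)+2*(ℓ:ℤ)+1 := by omega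
    have hm : ((n:ℤ)-(w:ℤ))*((n:ℤ)+(w:ℤ)+2*(ℓ:ℤ)+1) ≤ -((n:ℤ)+(w:ℤ)+2*(ℓ:ℤ)+1) := by
      nlinarith
    omega
  · rw [h]
    have : ((w:ℤ)-(w:ℤ))*((w:ℤ)+(w:ℤ)+2*(ℓ:ℤ)+1) = 0 := by ring
    omega
  · have hb : (0:ℤ) < (n:ℤ)+(w:ℤ)+2*(ℓ:ℤ)+1 := by omega
    have hm : ((n:ℤ)+(w:ℤ)+2*(ℓ:ℤ)+1) ≤ ((n:ℤ)-(w:ℤ))*((n:ℤ)+(w:ℤ)+2*(ℓ:ℤ)+1) := by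
      nlinarith
    omega

lemma Dlb1 (ℓ p w n : ℕ) (hp1 : 1 ≤ p) (hp2' : p + 1 ≤ ℓ) :
    Dv ℓ (-(((w:ℂ)+1)*((w:ℂ)+2*(ℓ:ℂ))) + 2*(p:ℂ)) n ≠ 0 := by
  have e : Dv ℓ (-(((w:ℂ)+1)*((w:ℂ)+2*(ℓ:ℂ))) + 2*(p:ℂ)) n
      = (((((n:ℤ)-(w:ℤ))*((n:ℤ)+(w:ℤ)+2*(ℓ:ℤ)+1) - 2*((ℓ:ℤ)-(p:ℤ))) : ℤ) : ℂ) := by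
    simp only [Dv]; push_cast; ring
  rw [e, Int.cast_ne_zero]
  have hpz : 1 ≤ (p:ℤ) := by exact_mod_cast hp1
  have hplz : (p:ℤ) + 1 ≤ (ℓ:ℤ) := by exact_mod_cast hp2'
  rcases lt_trichotomy (n:ℤ) (w:ℤ) with h | h | h
  · have hb : (0:ℤ) < (n:ℤ)+(w:ℤ)+2*(ℓ:ℤ)+1 := by omega
    have hm : ((n:ℤ)-(w:ℤ))*((n:ℤ)+(w:ℤ)+2*(ℓ:ℤ)+1) ≤ -((n:ℤ)+(w:ℤ)+2*(ℓ:ℤ)+1) := by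
      nlinarith
    omega
  · rw [h]
    have : ((w:ℤ)-(w:ℤ))*((w:ℤ)+(w:ℤ)+2*(ℓ:ℤ)+1) = 0 := by ring
    omega
  · have hb : (0:ℤ) < (n:ℤ)+(w:ℤ)+2*(ℓ:ℤ)+1 := by omega
    have hm : ((n:ℤ)+(w:ℤ)+2*(ℓ:ℤ)+1) ≤ ((n:ℤ)-(w:ℤ))*((n:ℤ)+(w:ℤ)+2*(ℓ:ℤ)+1) := by
      nlinarith
    omega

/-! ### The canonical polynomial solution -/

noncomputable def canPoly (ℓ w : ℕ) (la lb : ℂ) (sel : ℂ × ℂ → ℂ) : Polynomial ℂ :=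
  ∑ n ∈ Finset.range (w+1), C (sel (can ℓ w la lb n)) * X^n

lemma coeff_canPoly (ℓ w : ℕ) (la lb : ℂ) (sel : ℂ × ℂ → ℂ) (hsel : sel 0 = 0) (m : ℕ) :
    (canPoly ℓ w la lb sel).coeff m = sel (can ℓ w la lb m) := by
  unfold canPoly
  rw [finset_sum_coeff]
  simp only [coeff_C_mul, coeff_X_pow]
  rcases le_or_gt m w with h | h
  · rw [Finset.sum_eq_single m]
    · simp
    · intro k _ hk
      simp [Ne.symm hk]
    · intro hm
      exact absurd (Finset.mem_range.mpr (by omega)) hm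
  · rw [can_gt ℓ w la lb h, hsel]
    apply Finset.sum_eq_zero
    intro k hk
    have : m ≠ k := by have := Finset.mem_range.mp hk; omega
    simp [this]

/-! ### The core argument for a single `δ` -/

lemma core (ℓ p w : ℕ) (δ ε : Fin 2) (hne : ε ≠ δ)
    (hcover : ∀ j : Fin 2, j = δ ∨ j = ε)
    (dA dB : ℂ)
    (hiff : ∀ q : Fin 2 → Polynomial ℂ, IsSol ℓ p w δ q ↔
      (sysP ℓ dA (q δ) (q ε) = 0 ∧ sysP ℓ dB (q ε) (q δ) = 0))
    (hda0 : Dv ℓ dA w = 0) (hda : ∀ n : ℕ, n ≠ w → Dv ℓ dA n ≠ 0)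
    (hdb : ∀ n : ℕ, Dv ℓ dB n ≠ 0) :
    (∃ q₀ : Fin 2 → Polynomial ℂ, IsSol ℓ p w δ q₀ ∧ q₀ ≠ 0 ∧
        ∀ q : Fin 2 → Polynomial ℂ, IsSol ℓ p w δ q → ∃ c : ℂ, q = c • q₀) ∧
      ∀ q : Fin 2 → Polynomial ℂ, IsSol ℓ p w δ q → q ≠ 0 →
        (∀ i, (q i).natDegree ≤ w) ∧ (q δ).coeff w ≠ 0 ∧
        ∀ i, i ≠ δ → (q i).coeff w = 0 := by
  set A : Polynomial ℂ := canPoly ℓ w dA dB Prod.fst with hA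
  set B : Polynomial ℂ := canPoly ℓ w dA dB Prod.snd with hB
  have hAc : ∀ m, A.coeff m = (can ℓ w dA dB m).1 :=
    coeff_canPoly ℓ w dA dB Prod.fst rfl
  have hBc : ∀ m, B.coeff m = (can ℓ w dA dB m).2 :=
    coeff_canPoly ℓ w dA dB Prod.snd rfl
  set q₀ : Fin 2 → Polynomial ℂ := fun j => if j = δ then A else B with hq₀
  have hq₀δ : q₀ δ = A := by simp [hq₀]
  have hq₀ε : q₀ ε = B := by simp [hq₀, hne]
  -- q₀ is a solution
  have hsolq₀ : IsSol ℓ p w δ q₀ := by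
    rw [hiff, hq₀δ, hq₀ε, sysP_eq_zero_iff, sysP_eq_zero_iff]
    constructor
    · intro n
      have := can_rec1 ℓ w dA dB hda hda0 n
      simpa only [Rec, hAc, hBc] using this
    · intro n
      have := can_rec2 ℓ w dA dB hdb n
      simpa only [Rec, hAc, hBc] using this
  -- helper: apply master to any solution
  have getMaster : ∀ q : Fin 2 → Polynomial ℂ, IsSol ℓ p w δ q →
      (∀ n, w < n → (q δ).coeff n = 0 ∧ (q ε).coeff n = 0) ∧ (q ε).coeff w = 0 ∧
        (∀ n, (q δ).coeff n = (q δ).coeff w * (can ℓ w dA dB n).1 ∧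
              (q ε).coeff n = (q δ).coeff w * (can ℓ w dA dB n).2) := by
    intro q hq
    rw [hiff, sysP_eq_zero_iff, sysP_eq_zero_iff] at hq
    apply master ℓ w dA dB hda0 hda hdb _ _ hq.1 hq.2
      ((q δ).natDegree + (q ε).natDegree + 1)
    intro n hn
    constructor
    · exact coeff_eq_zero_of_natDegree_lt (by omega)
    · exact coeff_eq_zero_of_natDegree_lt (by omega)
  constructor
  · refine ⟨q₀, hsolq₀, ?_, ?_⟩
    · intro hzero
      have : A.coeff w = 0 := by
        rw [← hq₀δ, hzero]
        simp
      rw [hAc w, can_w] at this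
      exact one_ne_zero this
    · intro q hq
      obtain ⟨-, -, h3⟩ := getMaster q hq
      refine ⟨(q δ).coeff w, ?_⟩
      funext j
      rcases hcover j with rfl | rfl
      · ext n
        rw [Pi.smul_apply, hq₀δ, coeff_smul, smul_eq_mul, hAc n]
        exact (h3 n).1
      · ext n
        rw [Pi.smul_apply, hq₀ε, coeff_smul, smul_eq_mul, hBc n]
        exact (h3 n).2
  · intro q hq hq0
    obtain ⟨h1, h2, h3⟩ := getMaster q hq
    have hlead : (q δ).coeff w ≠ 0 := by
      intro hc
      apply hq0
      funext j
      rcases hcover j with rfl | rfl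
      · ext n
        rw [(h3 n).1, hc, zero_mul]
        simp
      · ext n
        rw [(h3 n).2, hc, zero_mul]
        simp
    refine ⟨?_, hlead, ?_⟩
    · intro i
      apply natDegree_le_iff_coeff_eq_zero.mpr
      intro m hm
      rcases hcover i with rfl | rfl
      · exact (h1 m hm).1
      · exact (h1 m hm).2
    · intro i hi
      have : i = ε := (hcover i).resolve_left hi
      rw [this]
      exact h2

/-- For each `δ`, the space of `ℂ²`-valued polynomial solutions is one-dimensional;
every nonzero polynomial solution has degree exactly `w` and leading coefficient a
nonzero multiple of the `δ`-th standard basis vector. -/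
theorem polynomial_solution_space (ℓ p w : ℕ) (hℓ : 2 ≤ ℓ) (hp1 : 1 ≤ p) (hp2 : p ≤ ℓ - 1) :
    ∀ δ : Fin 2,
      (∃ q₀ : Fin 2 → Polynomial ℂ, IsSol ℓ p w δ q₀ ∧ q₀ ≠ 0 ∧
        ∀ q : Fin 2 → Polynomial ℂ, IsSol ℓ p w δ q → ∃ c : ℂ, q = c • q₀) ∧
      ∀ q : Fin 2 → Polynomial ℂ, IsSol ℓ p w δ q → q ≠ 0 →
        (∀ i, (q i).natDegree ≤ w) ∧ (q δ).coeff w ≠ 0 ∧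
        ∀ i, i ≠ δ → (q i).coeff w = 0 := by
  have hp2' : p + 1 ≤ ℓ := by omega
  intro δ
  fin_cases δ
  · refine core ℓ p w 0 1 (by decide) (by decide)
      (-(((w:ℂ)+1)*((w:ℂ)+2*(ℓ:ℂ))) + 2*(ℓ:ℂ))
      (-(((w:ℂ)+1)*((w:ℂ)+2*(ℓ:ℂ))) + 2*(2*(ℓ:ℂ) - (p:ℂ)))
      ?_ (Dla0 ℓ w) (fun n hn => Dla ℓ w n hn) (fun n => Dlb0 ℓ p w n hp1 hp2')
    intro q
    exact isSol_iff ℓ p w 0 _ _ (by rw [LamMat, if_pos rfl]) q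
  · refine core ℓ p w 1 0 (by decide) (by decide)
      (-(((w:ℂ)+1)*((w:ℂ)+2*(ℓ:ℂ))) + 2*(ℓ:ℂ))
      (-(((w:ℂ)+1)*((w:ℂ)+2*(ℓ:ℂ))) + 2*(p:ℂ))
      ?_ (Dla0 ℓ w) (fun n hn => Dla ℓ w n hn) (fun n => Dlb1 ℓ p w n hp1 hp2')
    intro q
    rw [isSol_iff ℓ p w 1
      (-(((w:ℂ)+1)*((w:ℂ)+2*(ℓ:ℂ))) + 2*(p:ℂ))
      (-(((w:ℂ)+1)*((w:ℂ)+2*(ℓ:ℂ))) + 2*(ℓ:ℂ))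
      (by rw [LamMat, if_neg (by decide)]) q]
    exact and_comm

end Stmt13
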